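/- Let 1 ≤ d ≤ ℓ ≤ n and S ⊆ {0,1}^n, identified with F_2^n. If T is a uniformly random subset of S of size b = ∑_{i=0}^d C(ℓ,i), then the probability that h_T(d, F_2) = |T| (i.e., T has full Hilbert dimension) is at least 1 − b · 2^ℓ / |S|. -/

import Mathlib

open Finset

/-- The (affine) Hilbert function of a set `S ⊆ F^n`. -/
noncomputable def hilbertFn (F : Type) [Field F] {n : ℕ} (d : ℕ) (S : Set (Fin n → F)) : ℕ :=
  Module.finrank F (Submodule.span F
    {f : S → F | ∃ p : MvPolynomial (Fin n) F, p.totalDegree ≤ d ∧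
      ∀ s : S, MvPolynomial.eval (s : Fin n → F) p = f s})

namespace Stmt19

/-- binary encoding of a finset of naturals -/
def binN (s : Finset ℕ) : ℕ := ∑ i ∈ s, 2 ^ i

lemma binN_lt {s : Finset ℕ} {m : ℕ} (h : ∀ i ∈ s, i < m) : binN s < 2 ^ m := by
  have h1 : binN s ≤ ∑ i ∈ range m, 2 ^ i :=
    Finset.sum_le_sum_of_subset (fun i hi => mem_range.2 (h i hi))
  have h2 : ∑ i ∈ range m, (2:ℕ) ^ i = 2 ^ m - 1 := by
    simpa using Nat.geomSum_eq (le_refl 2) m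
  have h3 : 1 ≤ 2 ^ m := Nat.one_le_two_pow
  omega

lemma binN_eq_zero {s : Finset ℕ} (h : binN s = 0) : s = ∅ := by
  rw [binN, Finset.sum_eq_zero_iff] at h
  refine Finset.eq_empty_iff_forall_notMem.2 (fun i hi => ?_)
  have := h i hi
  have : (2:ℕ) ^ i ≠ 0 := Nat.pos_iff_ne_zero.1 (Nat.two_pow_pos i)
  omega

lemma binN_inj_aux : ∀ (k : ℕ) (s t : Finset ℕ), s.card ≤ k → binN s = binN t → s = t := by
  intro k
  induction k with
  | zero =>
    intro s t hs h
    have hs0 : s = ∅ := card_eq_zero.1 (Nat.le_zero.1 hs)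
    subst hs0
    simp only [binN, sum_empty] at h
    exact (binN_eq_zero h.symm).symm
  | succ k ih =>
    intro s t hs h
    rcases s.eq_empty_or_nonempty with rfl | hsne
    · simp only [binN, sum_empty] at h
      exact (binN_eq_zero h.symm).symm
    rcases t.eq_empty_or_nonempty with rfl | htne
    · simp only [binN, sum_empty] at h
      exact binN_eq_zero h
    set Ms := s.max' hsne with hMs
    set Mt := t.max' htne with hMt
    have hse : binN (s.erase Ms) + 2 ^ Ms = binN s := by
      simpa [binN] using Finset.sum_erase_add s (fun i => 2 ^ i) (s.max'_mem hsne)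
    have hte : binN (t.erase Mt) + 2 ^ Mt = binN t := by
      simpa [binN] using Finset.sum_erase_add t (fun i => 2 ^ i) (t.max'_mem htne)
    have hmax : Ms = Mt := by
      by_contra hne
      rcases Nat.lt_or_ge Ms Mt with hlt | hge
      · have h1 : binN s < 2 ^ Mt := binN_lt (fun i hi => lt_of_le_of_lt (s.le_max' i hi) hlt)
        have h2 : 2 ^ Mt ≤ binN t := Finset.single_le_sum (fun j _ => Nat.zero_le _) (t.max'_mem htne)
        omega
      · have hlt : Mt < Ms := lt_of_le_of_ne hge (Ne.symm hne)
        have h1 : binN t < 2 ^ Ms := binN_lt (fun i hi => lt_of_le_of_lt (t.le_max' i hi) hlt)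
        have h2 : 2 ^ Ms ≤ binN s := Finset.single_le_sum (fun j _ => Nat.zero_le _) (s.max'_mem hsne)
        omega
    have hcard : (s.erase Ms).card ≤ k := by
      have h1 := Finset.card_erase_of_mem (s.max'_mem hsne)
      rw [← hMs] at h1
      have h2 : 1 ≤ s.card := Finset.card_pos.2 hsne
      omega
    have heq : binN (s.erase Ms) = binN (t.erase Mt) := by
      have hp : (2:ℕ) ^ Ms = 2 ^ Mt := by rw [hmax]
      omega
    have hst := ih (s.erase Ms) (t.erase Mt) hcard heq
    have h1 : s = insert Ms (s.erase Ms) := (Finset.insert_erase (s.max'_mem hsne)).symm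
    have h2 : t = insert Mt (t.erase Mt) := (Finset.insert_erase (t.max'_mem htne)).symm
    rw [h1, h2, hst, hmax]

lemma binN_inj : Function.Injective binN := fun s t h => binN_inj_aux s.card s t le_rfl h

variable {n : ℕ}

/-- binary encoding of a finset of `Fin n` -/
def binF (s : Finset (Fin n)) : ℕ := binN (s.map Fin.valEmbedding)

lemma binF_inj : Function.Injective (binF (n := n)) := fun s t h =>
  Finset.map_injective _ (binN_inj h)

lemma binF_lt (s : Finset (Fin n)) : binF s < 2 ^ n := by
  refine binN_lt (fun i hi => ?_)
  simp only [mem_map, Fin.valEmbedding_apply] at hi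
  obtain ⟨j, _, rfl⟩ := hi
  exact j.isLt

lemma binF_mono {s t : Finset (Fin n)} (h : s ⊆ t) : binF s ≤ binF t :=
  Finset.sum_le_sum_of_subset (Finset.map_subset_map.2 h)

lemma binF_union_disjoint {s t : Finset (Fin n)} (h : Disjoint s t) :
    binF (s ∪ t) = binF s + binF t := by
  simp only [binF, binN, Finset.map_union]
  rw [Finset.sum_union ((Finset.disjoint_map Fin.valEmbedding).2 h)]

/-- the key (graded) order on monomials -/
def kf (s : Finset (Fin n)) : ℕ := s.card * 2 ^ n + binF s

lemma kf_lt_of_card_lt {s t : Finset (Fin n)} (h : s.card < t.card) : kf s < kf t := by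
  have hb := binF_lt s
  calc kf s = s.card * 2 ^ n + binF s := rfl
    _ < s.card * 2 ^ n + 2 ^ n := by omega
    _ = (s.card + 1) * 2 ^ n := by ring
    _ ≤ t.card * 2 ^ n := Nat.mul_le_mul_right _ h
    _ ≤ kf t := Nat.le_add_right _ _

lemma kf_card_le {s t : Finset (Fin n)} (h : kf s ≤ kf t) : s.card ≤ t.card := by
  by_contra hc
  push_neg at hc
  exact absurd h (Nat.not_le.2 (kf_lt_of_card_lt hc))

lemma kf_inj : Function.Injective (kf (n := n)) := by
  intro s t h
  have hcard : s.card = t.card := Nat.le_antisymm (kf_card_le h.le) (kf_card_le h.ge)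
  have hb : binF s = binF t := by
    unfold kf at h; rw [hcard] at h; omega
  exact binF_inj hb

lemma kf_mono {s t : Finset (Fin n)} (h : s ⊆ t) : kf s ≤ kf t :=
  Nat.add_le_add (Nat.mul_le_mul_right _ (Finset.card_le_card h)) (binF_mono h)

/-- main order property: adding a fixed disjoint set preserves strict order -/
lemma kf_union_le {s t r : Finset (Fin n)} (hst : kf s ≤ kf t) (hrt : Disjoint r t) :
    kf (s ∪ r) ≤ kf (t ∪ r) := by
  have hcd : s.card ≤ t.card := kf_card_le hst
  have hsub : binF (s ∪ r) ≤ binF s + binF r := by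
    have h1 : s ∪ r = s ∪ (r \ s) := by rw [Finset.union_sdiff_self_eq_union]
    rw [h1, binF_union_disjoint (Finset.disjoint_sdiff)]
    exact Nat.add_le_add_left (binF_mono (Finset.sdiff_subset)) _
  have hcsub : (s ∪ r).card ≤ s.card + r.card := Finset.card_union_le s r
  rcases Nat.lt_or_ge (s ∪ r).card (t ∪ r).card with hlt | hge
  · exact le_of_lt (kf_lt_of_card_lt hlt)
  · -- forced equalities
    have htr : (t ∪ r).card = t.card + r.card := by
      rw [Finset.card_union_of_disjoint hrt.symm]
    have hch : s.card = t.card ∧ (s ∪ r).card = s.card + r.card := by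
      constructor <;> omega
    obtain ⟨h1, h2⟩ := hch
    have hdisj : Disjoint s r := by
      by_contra hd
      have : (s ∪ r).card < s.card + r.card := by
        have := Finset.card_union_add_card_inter s r
        have : (s ∩ r).card ≠ 0 := by
          intro hz
          exact hd (Finset.disjoint_iff_inter_eq_empty.2 (Finset.card_eq_zero.1 hz))
        omega
      omega
    have hbs : binF s ≤ binF t := by
      have hst' := hst
      unfold kf at hst'
      rw [h1] at hst'
      omega
    have e1 : binF (s ∪ r) = binF s + binF r := binF_union_disjoint hdisj
    have e2 : binF (t ∪ r) = binF t + binF r := binF_union_disjoint hrt.symm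
    unfold kf
    have : (s ∪ r).card = (t ∪ r).card := by omega
    rw [this, e1, e2]
    omega

lemma union_eq_union_of_disjoint {s t r : Finset (Fin n)} (hst : kf s ≤ kf t)
    (hrt : Disjoint r t) (he : s ∪ r = t ∪ r) : s = t := by
  have hts : t ⊆ s := by
    intro x hx
    have hxu : x ∈ s ∪ r := by rw [he]; exact Finset.mem_union_left _ hx
    rcases Finset.mem_union.1 hxu with h | h
    · exact h
    · exact absurd hx (Finset.disjoint_left.1 hrt h)
  have := kf_mono hts
  exact kf_inj (Nat.le_antisymm hst this)


variable {n : ℕ}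

/-- monomial function on the cube -/
def chi (s : Finset (Fin n)) : (Fin n → ZMod 2) → ZMod 2 := fun x => ∏ i ∈ s, x i

lemma zmod2_cases (a : ZMod 2) : a = 0 ∨ a = 1 := by revert a; decide
lemma zmod2_mul_self (a : ZMod 2) : a * a = a := by revert a; decide

lemma chi_mul (s t : Finset (Fin n)) : chi s * chi t = chi (s ∪ t) := by
  funext x
  show (∏ i ∈ s, x i) * (∏ i ∈ t, x i) = ∏ i ∈ s ∪ t, x i
  rw [← Finset.prod_union_inter]
  rcases zmod2_cases (∏ i ∈ s ∩ t, x i) with h | h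
  · obtain ⟨i, hi, hxi⟩ := Finset.prod_eq_zero_iff.1 h
    rw [h, mul_zero]
    exact (Finset.prod_eq_zero (Finset.mem_union_left _ (Finset.mem_of_mem_inter_left hi)) hxi).symm
  · rw [h, mul_one]

/-- indicator point of a finset -/
def ipt (s : Finset (Fin n)) : Fin n → ZMod 2 := fun i => if i ∈ s then 1 else 0

lemma chi_ipt (t s : Finset (Fin n)) : chi t (ipt s) = if t ⊆ s then 1 else 0 := by
  by_cases h : t ⊆ s
  · rw [if_pos h]
    refine Finset.prod_eq_one (fun i hi => ?_)
    simp [ipt, h hi]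
  · rw [if_neg h]
    obtain ⟨i, hit, his⟩ := Finset.not_subset.1 h
    exact Finset.prod_eq_zero hit (by simp [ipt, his])

lemma card_filter_subset_powerset (t s : Finset (Fin n)) (h : t ⊆ s) :
    (s.powerset.filter (fun u => t ⊆ u)).card = 2 ^ (s \ t).card := by
  rw [← Finset.card_powerset]
  apply Finset.card_bij (fun u _ => u \ t)
  · intro u hu
    simp only [Finset.mem_filter, Finset.mem_powerset] at hu
    exact Finset.mem_powerset.2 (Finset.sdiff_subset_sdiff hu.1 le_rfl)
  · intro u hu v hv huv
    simp only [Finset.mem_filter, Finset.mem_powerset] at hu hv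
    have : u \ t ∪ t = v \ t ∪ t := by rw [huv]
    rwa [Finset.sdiff_union_of_subset hu.2, Finset.sdiff_union_of_subset hv.2] at this
  · intro v hv
    refine ⟨v ∪ t, ?_, ?_⟩
    · simp only [Finset.mem_filter, Finset.mem_powerset] at hv ⊢
      exact ⟨Finset.union_subset (hv.trans (Finset.sdiff_subset)) h, Finset.subset_union_right⟩
    · simp only [Finset.mem_powerset] at hv
      rw [Finset.union_sdiff_right]
      exact Finset.sdiff_eq_self_of_disjoint (Finset.disjoint_of_subset_left hv Finset.sdiff_disjoint)

lemma chi_linearIndependent : LinearIndependent (ZMod 2) (chi (n := n)) := by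
  rw [Fintype.linearIndependent_iff]
  intro c hc s
  -- evaluate the sum over all indicator points of subsets of s
  have key : ∑ u ∈ s.powerset, (∑ t : Finset (Fin n), c t • chi t) (ipt u) = 0 := by
    rw [hc]; simp
  have expand : ∀ u : Finset (Fin n),
      (∑ t : Finset (Fin n), c t • chi t) (ipt u) = ∑ t : Finset (Fin n), c t * (if t ⊆ u then 1 else 0) := by
    intro u
    rw [Finset.sum_apply]
    refine Finset.sum_congr rfl (fun t _ => ?_)
    rw [Pi.smul_apply, smul_eq_mul, chi_ipt]
  rw [Finset.sum_congr rfl (fun u _ => expand u), Finset.sum_comm] at key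
  have inner : ∀ t : Finset (Fin n),
      ∑ u ∈ s.powerset, c t * (if t ⊆ u then 1 else 0) = c t * (if t = s then 1 else 0) := by
    intro t
    rw [← Finset.mul_sum]
    congr 1
    rw [← Finset.sum_filter]
    simp only [Finset.sum_const, nsmul_eq_mul, mul_one]
    by_cases hts : t ⊆ s
    · rw [card_filter_subset_powerset t s hts]
      by_cases hte : t = s
      · subst hte; simp
      · rw [if_neg hte]
        have hcard : 0 < (s \ t).card := by
          rcases Finset.eq_empty_or_nonempty (s \ t) with he | hne
          · exfalso
            have : s ⊆ t := by
              intro x hx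
              by_contra hxt
              exact absurd (Finset.mem_sdiff.2 ⟨hx, hxt⟩) (by simp [he])
            exact hte (Finset.Subset.antisymm hts this)
          · exact Finset.card_pos.2 hne
        obtain ⟨k, hk⟩ := Nat.exists_eq_succ_of_ne_zero (Nat.pos_iff_ne_zero.1 hcard)
        rw [hk]
        push_cast
        rw [pow_succ]
        have : (2 : ZMod 2) = 0 := by decide
        rw [this, mul_zero]
    · have hempty : s.powerset.filter (fun u => t ⊆ u) = ∅ := by
        refine Finset.filter_eq_empty_iff.2 (fun u hu => ?_)
        intro htu
        exact hts (htu.trans (Finset.mem_powerset.1 hu))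
      rw [hempty]
      have hne : t ≠ s := fun he => hts (he ▸ le_rfl)
      simp [hne]
  rw [Finset.sum_congr rfl (fun t _ => inner t)] at key
  simp only [mul_ite, mul_one, mul_zero, Finset.sum_ite_eq', Finset.mem_univ, if_pos] at key
  exact key

noncomputable def chiBasis : Module.Basis (Finset (Fin n)) (ZMod 2) ((Fin n → ZMod 2) → ZMod 2) :=
  basisOfLinearIndependentOfCardEqFinrank chi_linearIndependent (by
    rw [Module.finrank_pi]
    rw [Fintype.card_finset, Fintype.card_pi]
    simp [ZMod.card])

lemma chiBasis_eq (s : Finset (Fin n)) : (chiBasis : Module.Basis (Finset (Fin n)) (ZMod 2) _) s = chi s := by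
  rw [chiBasis, coe_basisOfLinearIndependentOfCardEqFinrank]



noncomputable def argmaxKf (E : Finset (Finset (Fin n))) : Finset (Fin n) :=
  if h : E.Nonempty then Classical.choose (Finset.exists_max_image E kf h) else ∅

lemma argmaxKf_spec {E : Finset (Finset (Fin n))} (h : E.Nonempty) :
    argmaxKf E ∈ E ∧ ∀ s ∈ E, kf s ≤ kf (argmaxKf E) := by
  rw [argmaxKf, dif_pos h]
  obtain ⟨hmem, hmax⟩ := Classical.choose_spec (Finset.exists_max_image E kf h)
  exact ⟨hmem, hmax⟩

abbrev W (n : ℕ) := (Fin n → ZMod 2) → ZMod 2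

noncomputable def lm (g : W n) : Finset (Fin n) := argmaxKf (chiBasis.repr g).support

lemma repr_support_nonempty {g : W n} (hg : g ≠ 0) : (chiBasis.repr g).support.Nonempty := by
  rw [Finsupp.support_nonempty_iff]
  intro h
  exact hg (by simpa using (chiBasis.repr.map_eq_zero_iff).1 h)

lemma lm_mem {g : W n} (hg : g ≠ 0) : lm g ∈ (chiBasis.repr g).support :=
  (argmaxKf_spec (repr_support_nonempty hg)).1

lemma lm_max {g : W n} (hg : g ≠ 0) : ∀ s ∈ (chiBasis.repr g).support, kf s ≤ kf (lm g) :=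
  (argmaxKf_spec (repr_support_nonempty hg)).2

lemma lm_spec {g : W n} (hg : g ≠ 0) {t : Finset (Fin n)}
    (hmem : t ∈ (chiBasis.repr g).support)
    (hmax : ∀ s ∈ (chiBasis.repr g).support, kf s ≤ kf t) : lm g = t :=
  kf_inj (Nat.le_antisymm (hmax _ (lm_mem hg)) (lm_max hg t hmem))

lemma repr_chi_mul (r : Finset (Fin n)) (g : W n) (u : Finset (Fin n)) :
    chiBasis.repr (chi r * g) u
      = ∑ s : Finset (Fin n), chiBasis.repr g s * (if r ∪ s = u then 1 else 0) := by
  have hexp : chi r * g = ∑ s : Finset (Fin n), chiBasis.repr g s • chi (r ∪ s) := by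
    conv_lhs => rw [← chiBasis.sum_repr g]
    rw [Finset.mul_sum]
    refine Finset.sum_congr rfl (fun s _ => ?_)
    rw [chiBasis_eq, mul_smul_comm, chi_mul]
  rw [hexp, map_sum]
  rw [Finsupp.finset_sum_apply]
  refine Finset.sum_congr rfl (fun s _ => ?_)
  rw [map_smul, Finsupp.smul_apply]
  have : chiBasis.repr (chi (r ∪ s)) = Finsupp.single (r ∪ s) 1 := by
    rw [← chiBasis_eq, Module.Basis.repr_self]
  rw [this, Finsupp.single_apply, smul_eq_mul]

lemma chi_mul_lm {g : W n} (hg : g ≠ 0) {r : Finset (Fin n)} (hdisj : Disjoint r (lm g)) :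
    chi r * g ≠ 0 ∧ lm (chi r * g) = r ∪ lm g := by
  set t := lm g with ht
  have hcoef : chiBasis.repr (chi r * g) (r ∪ t) = chiBasis.repr g t := by
    rw [repr_chi_mul]
    rw [Finset.sum_eq_single t]
    · simp
    · intro s _ hst
      by_cases hcs : chiBasis.repr g s = 0
      · rw [hcs, zero_mul]
      · have hs : s ∈ (chiBasis.repr g).support := Finsupp.mem_support_iff.2 hcs
        have hle : kf s ≤ kf t := lm_max hg s hs
        rw [if_neg, mul_zero]
        intro he
        rw [Finset.union_comm r s, Finset.union_comm r t] at he
        exact hst (union_eq_union_of_disjoint hle hdisj he)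
    · intro h
      exact absurd (Finset.mem_univ t) h
  have hct : chiBasis.repr g t ≠ 0 := Finsupp.mem_support_iff.1 (lm_mem hg)
  have hne : chi r * g ≠ 0 := by
    intro h0
    rw [h0] at hcoef
    simp at hcoef
    exact hct hcoef.symm
  refine ⟨hne, ?_⟩
  refine lm_spec hne (Finsupp.mem_support_iff.2 (by rw [hcoef]; exact hct)) ?_
  intro u hu
  have hval : chiBasis.repr (chi r * g) u ≠ 0 := Finsupp.mem_support_iff.1 hu
  rw [repr_chi_mul] at hval
  obtain ⟨s, _, hs⟩ := Finset.exists_ne_zero_of_sum_ne_zero hval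
  have hcs : chiBasis.repr g s ≠ 0 := fun h => hs (by rw [h, zero_mul])
  have hru : r ∪ s = u := by
    by_contra hc
    exact hs (by rw [if_neg hc, mul_zero])
  have hle : kf s ≤ kf t := lm_max hg s (Finsupp.mem_support_iff.2 hcs)
  rw [← hru, Finset.union_comm r s, Finset.union_comm r t]
  exact kf_union_le hle hdisj


/-- restriction map -/
noncomputable def res (A : Set (Fin n → ZMod 2)) : W n →ₗ[ZMod 2] (A → ZMod 2) :=
  LinearMap.funLeft _ _ Subtype.val

/-- span of monomials of degree at most d -/
noncomputable def Md (n d : ℕ) : Submodule (ZMod 2) (W n) :=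
  Submodule.span (ZMod 2) (chi '' {s : Finset (Fin n) | s.card ≤ d})

lemma chi_mem_Md {d : ℕ} {s : Finset (Fin n)} (h : s.card ≤ d) : chi s ∈ Md n d :=
  Submodule.subset_span ⟨s, h, rfl⟩

noncomputable def IA (A : Finset (Fin n → ZMod 2)) : Submodule (ZMod 2) (W n) :=
  LinearMap.ker (res (↑A : Set (Fin n → ZMod 2)))

lemma mem_IA {A : Finset (Fin n → ZMod 2)} {g : W n} :
    g ∈ IA A ↔ ∀ a ∈ A, g a = 0 := by
  rw [IA, LinearMap.mem_ker]
  constructor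
  · intro h a ha
    exact congrFun h ⟨a, ha⟩
  · intro h
    funext a
    exact h a.1 a.2

/-- independence of a family with distinct leading monomials -/
lemma linearIndependent_of_lm {ι : Type} [Fintype ι] (v : ι → W n) (h0 : ∀ i, v i ≠ 0)
    (hinj : Function.Injective (fun i => lm (v i))) : LinearIndependent (ZMod 2) v := by
  rw [Fintype.linearIndependent_iff]
  intro c hc
  by_contra hne
  push_neg at hne
  have hE : (Finset.univ.filter (fun i => c i ≠ 0)).Nonempty := by
    obtain ⟨i, hi⟩ := hne
    exact ⟨i, Finset.mem_filter.2 ⟨Finset.mem_univ i, hi⟩⟩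
  set E := Finset.univ.filter (fun i => c i ≠ 0) with hEdef
  obtain ⟨i₀, hi₀, hmax⟩ := Finset.exists_max_image E (fun i => kf (lm (v i))) hE
  set t₀ := lm (v i₀) with ht₀
  have hrepr : chiBasis.repr (∑ i : ι, c i • v i) t₀ = 0 := by rw [hc]; simp
  rw [map_sum, Finsupp.finset_sum_apply] at hrepr
  have hterm : ∀ i : ι, i ≠ i₀ → (chiBasis.repr (c i • v i)) t₀ = 0 := by
    intro i hi
    by_cases hci : c i = 0
    · rw [hci, zero_smul]; simp
    · rw [map_smul, Finsupp.smul_apply, smul_eq_mul]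
      have hiE : i ∈ E := Finset.mem_filter.2 ⟨Finset.mem_univ i, hci⟩
      by_cases hsup : t₀ ∈ (chiBasis.repr (v i)).support
      · exfalso
        have h1 : kf t₀ ≤ kf (lm (v i)) := lm_max (h0 i) t₀ hsup
        have h2 : kf (lm (v i)) ≤ kf t₀ := hmax i hiE
        have : lm (v i) = lm (v i₀) := kf_inj (Nat.le_antisymm h2 h1)
        exact hi (hinj this)
      · rw [Finsupp.notMem_support_iff.1 hsup, mul_zero]
  rw [Finset.sum_eq_single i₀ (fun i _ hi => hterm i hi) (fun h => absurd (Finset.mem_univ i₀) h)]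
    at hrepr
  rw [map_smul, Finsupp.smul_apply, smul_eq_mul] at hrepr
  have hc₀ : c i₀ ≠ 0 := (Finset.mem_filter.1 hi₀).2
  have hl : chiBasis.repr (v i₀) t₀ ≠ 0 := Finsupp.mem_support_iff.1 (lm_mem (h0 i₀))
  exact hl (by
    rcases mul_eq_zero.1 hrepr with h | h
    · exact absurd h hc₀
    · exact h)

noncomputable def LMset (A : Finset (Fin n → ZMod 2)) : Finset (Finset (Fin n)) :=
  @Finset.filter _ (fun t => ∃ g, g ∈ IA A ∧ g ≠ 0 ∧ lm g = t) (Classical.decPred _) Finset.univ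

lemma LMset_upclosed {A : Finset (Fin n → ZMod 2)} {t t' : Finset (Fin n)}
    (h : t ∈ LMset A) (hsub : t ⊆ t') : t' ∈ LMset A := by
  simp only [LMset, Finset.mem_filter] at h ⊢
  obtain ⟨-, g, hgI, hg0, hlm⟩ := h
  refine ⟨Finset.mem_univ _, chi (t' \ t) * g, ?_, ?_, ?_⟩
  · rw [mem_IA] at hgI ⊢
    intro a ha
    show chi (t' \ t) a * g a = 0
    rw [hgI a ha, mul_zero]
  · exact (chi_mul_lm hg0 (hlm ▸ Finset.sdiff_disjoint)).1
  · rw [(chi_mul_lm hg0 (hlm ▸ Finset.sdiff_disjoint)).2, hlm]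
    exact Finset.sdiff_union_of_subset hsub

lemma card_LMset_le (A : Finset (Fin n → ZMod 2)) :
    (LMset A).card ≤ Module.finrank (ZMod 2) (IA A) := by
  have hw : ∀ t : {x // x ∈ LMset A}, ∃ g, g ∈ IA A ∧ g ≠ 0 ∧ lm g = t.1 := by
    intro t
    have := t.2
    simp only [LMset, Finset.mem_filter] at this
    exact this.2
  choose g hgI hg0 hglm using hw
  have hli : LinearIndependent (ZMod 2) g :=
    linearIndependent_of_lm g hg0 (by
      intro a b hab
      apply Subtype.ext
      rw [← hglm a, ← hglm b]
      exact hab)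
  have hli' : LinearIndependent (ZMod 2) (fun t => (⟨g t, hgI t⟩ : IA A)) :=
    LinearIndependent.of_comp (IA A).subtype hli
  calc (LMset A).card = Fintype.card {x // x ∈ LMset A} := (Fintype.card_coe _).symm
    _ ≤ Module.finrank (ZMod 2) (IA A) := hli'.fintype_card_le_finrank

lemma finrank_W : Module.finrank (ZMod 2) (W n) = 2 ^ n := by
  rw [Module.finrank_pi, Fintype.card_pi]
  simp [ZMod.card]

lemma finrank_IA (A : Finset (Fin n → ZMod 2)) :
    Module.finrank (ZMod 2) (IA A) + A.card = 2 ^ n := by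
  have hsurj : Function.Surjective (res (↑A : Set (Fin n → ZMod 2))) :=
    LinearMap.funLeft_surjective_of_injective _ _ _ Subtype.val_injective
  have := LinearMap.finrank_range_add_finrank_ker (res (↑A : Set (Fin n → ZMod 2)))
  rw [LinearMap.range_eq_top.2 hsurj, finrank_top, Module.finrank_pi, finrank_W] at this
  have h2 : Fintype.card (↑(↑A : Set (Fin n → ZMod 2))) = A.card := by simp
  rw [IA]
  omega

noncomputable def Dset (A : Finset (Fin n → ZMod 2)) : Finset (Finset (Fin n)) :=
  Finset.univ \ LMset A

lemma Dset_downclosed {A : Finset (Fin n → ZMod 2)} {s t : Finset (Fin n)}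
    (hs : s ∈ Dset A) (hts : t ⊆ s) : t ∈ Dset A := by
  rw [Dset, Finset.mem_sdiff] at hs ⊢
  exact ⟨Finset.mem_univ _, fun ht => hs.2 (LMset_upclosed ht hts)⟩

lemma card_Dset (A : Finset (Fin n → ZMod 2)) : A.card ≤ (Dset A).card := by
  have h1 : (Dset A).card = 2 ^ n - (LMset A).card := by
    rw [Dset, Finset.card_sdiff_of_subset (Finset.subset_univ _), Finset.card_univ, Fintype.card_finset,
      Fintype.card_fin]
  have h2 := card_LMset_le A
  have h3 := finrank_IA A
  have h4 : (LMset A).card ≤ 2 ^ n := by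
    calc (LMset A).card ≤ Finset.univ.card := Finset.card_le_card (Finset.subset_univ _)
      _ = 2 ^ n := by rw [Finset.card_univ, Fintype.card_finset, Fintype.card_fin]
  omega

lemma finrank_map_res_ge (A : Finset (Fin n → ZMod 2)) (d : ℕ) :
    ((Dset A).filter (fun s => s.card ≤ d)).card
      ≤ Module.finrank (ZMod 2) ((Md n d).map (res (↑A : Set (Fin n → ZMod 2)))) := by
  set Δd := (Dset A).filter (fun s => s.card ≤ d) with hΔd
  set v : {x // x ∈ Δd} → ((↑A : Set (Fin n → ZMod 2)) → ZMod 2) :=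
    fun s => res (↑A : Set (Fin n → ZMod 2)) (chi s.1) with hv
  have hli : LinearIndependent (ZMod 2) v := by
    rw [Fintype.linearIndependent_iff]
    intro c hc
    set g : W n := ∑ s : {x // x ∈ Δd}, c s • chi s.1 with hg
    have hres : res (↑A : Set (Fin n → ZMod 2)) g = 0 := by
      rw [hg, map_sum]
      rw [← hc]
      refine Finset.sum_congr rfl (fun s _ => ?_)
      rw [map_smul]
    have hgI : g ∈ IA A := by rw [IA, LinearMap.mem_ker]; exact hres
    have hrepr : ∀ u : Finset (Fin n),
        chiBasis.repr g u = ∑ s : {x // x ∈ Δd}, c s * (if s.1 = u then 1 else 0) := by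
      intro u
      rw [hg, map_sum, Finsupp.finset_sum_apply]
      refine Finset.sum_congr rfl (fun s _ => ?_)
      rw [map_smul, Finsupp.smul_apply, smul_eq_mul, ← chiBasis_eq, Module.Basis.repr_self,
        Finsupp.single_apply]
    have hg0 : g = 0 := by
      by_contra hg0
      have hlmem : lm g ∈ LMset A := by
        simp only [LMset, Finset.mem_filter]
        exact ⟨Finset.mem_univ _, g, hgI, hg0, rfl⟩
      have hsup : lm g ∈ (chiBasis.repr g).support := lm_mem hg0
      have hval : chiBasis.repr g (lm g) ≠ 0 := Finsupp.mem_support_iff.1 hsup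
      rw [hrepr] at hval
      obtain ⟨s, -, hs⟩ := Finset.exists_ne_zero_of_sum_ne_zero hval
      have : s.1 = lm g := by
        by_contra hc'
        exact hs (by rw [if_neg hc', mul_zero])
      have hsΔ : lm g ∈ Δd := this ▸ s.2
      have : lm g ∈ Dset A := (Finset.mem_filter.1 hsΔ).1
      rw [Dset, Finset.mem_sdiff] at this
      exact this.2 hlmem
    intro s₀
    have := hrepr s₀.1
    rw [hg0] at this
    simp only [map_zero, Finsupp.coe_zero, Pi.zero_apply] at this
    rw [Finset.sum_eq_single s₀] at this
    · rw [if_pos rfl, mul_one] at this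
      exact this.symm
    · intro s _ hss
      rw [if_neg, mul_zero]
      intro he
      exact hss (Subtype.ext he)
    · intro h
      exact absurd (Finset.mem_univ s₀) h
  have hspan : Submodule.span (ZMod 2) (Set.range v)
      ≤ (Md n d).map (res (↑A : Set (Fin n → ZMod 2))) := by
    rw [Submodule.span_le]
    rintro - ⟨s, rfl⟩
    exact ⟨chi s.1, chi_mem_Md (Finset.mem_filter.1 s.2).2, rfl⟩
  calc Δd.card = Fintype.card {x // x ∈ Δd} := (Fintype.card_coe _).symm
    _ = Module.finrank (ZMod 2) (Submodule.span (ZMod 2) (Set.range v)) :=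
        (finrank_span_eq_card hli).symm
    _ ≤ _ := Submodule.finrank_mono hspan


open FinsetFamily in
lemma kk_step (Δ : Finset (Finset (Fin n))) (hdc : ∀ s ∈ Δ, ∀ t ⊆ s, t ∈ Δ)
    {l j : ℕ} (hln : l ≤ n) (hjl : j < l)
    (h : l.choose (j + 1) ≤ (Δ.filter (fun s => s.card = j + 1)).card) :
    l.choose j ≤ (Δ.filter (fun s => s.card = j)).card := by
  set 𝒜 := Δ.filter (fun s => s.card = j + 1) with h𝒜
  have hsized : (↑𝒜 : Set (Finset (Fin n))).Sized (j + 1) := by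
    intro s hs
    exact (Finset.mem_filter.1 hs).2
  have hkk := Finset.kruskal_katona_lovasz_form (i := 1) (r := j + 1) (k := l)
    (le_add_self) hjl hln hsized h
  simp only [Nat.add_sub_cancel, Function.iterate_one] at hkk
  have key : ∀ (inst : DecidableEq (Fin n)),
      @Finset.shadow _ inst 𝒜 ⊆ Δ.filter (fun s => s.card = j) := by
    intro inst
    rw [Subsingleton.elim inst (by infer_instance : DecidableEq (Fin n))]
    intro s hs
    rw [Finset.mem_shadow_iff] at hs
    obtain ⟨t, ht, a, hat, rfl⟩ := hs
    rw [Finset.mem_filter] at ht ⊢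
    refine ⟨hdc t ht.1 _ (Finset.erase_subset _ _), ?_⟩
    rw [Finset.card_erase_of_mem hat, ht.2]
    omega
  exact hkk.trans (Finset.card_le_card (key _))

lemma count_lemma (Δ : Finset (Finset (Fin n))) (hdc : ∀ s ∈ Δ, ∀ t ⊆ s, t ∈ Δ)
    (l d : ℕ) (hdl : d ≤ l) (hln : l ≤ n) (hl : 2 ^ l ≤ Δ.card) :
    ∑ i ∈ Finset.range (d + 1), l.choose i ≤ (Δ.filter (fun s => s.card ≤ d)).card := by
  set a : ℕ → ℕ := fun j => (Δ.filter (fun s => s.card = j)).card with ha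
  have hsum_le : ∀ m : ℕ, (Δ.filter (fun s => s.card ≤ m)).card
      = ∑ j ∈ Finset.range (m + 1), a j := by
    intro m
    rw [Finset.card_eq_sum_card_fiberwise (f := fun s : Finset (Fin n) => s.card)
      (s := Δ.filter (fun s => s.card ≤ m)) (t := Finset.range (m + 1))
      (fun s hs => Finset.mem_range.2 (Nat.lt_succ_of_le (Finset.mem_filter.1 hs).2))]
    refine Finset.sum_congr rfl (fun j hj => ?_)
    congr 1
    rw [Finset.filter_filter]
    apply Finset.filter_congr
    intro s _
    have hjm : j ≤ m := Nat.lt_succ_iff.1 (Finset.mem_range.1 hj)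
    constructor
    · intro h; exact h.2
    · intro h; exact ⟨h ▸ hjm, h⟩
  have htotal : Δ.card = ∑ j ∈ Finset.range (n + 1), a j := by
    have : Δ = Δ.filter (fun s => s.card ≤ n) := by
      rw [Finset.filter_true_of_mem]
      intro s _
      exact le_trans (Finset.card_le_univ s) (by simp)
    rw [this] at hl ⊢
    exact hsum_le n
  by_contra hcon
  push_neg at hcon
  -- find a deficient level below d
  have hj0 : ∃ j0, j0 ≤ d ∧ a j0 < l.choose j0 := by
    by_contra hno
    push_neg at hno
    have : ∑ i ∈ Finset.range (d + 1), l.choose i ≤ ∑ j ∈ Finset.range (d + 1), a j :=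
      Finset.sum_le_sum (fun j hj => hno j (Nat.lt_succ_iff.1 (Finset.mem_range.1 hj)))
    rw [← hsum_le d] at this
    exact absurd hcon (not_lt.2 this)
  obtain ⟨j0, hj0d, hj0a⟩ := hj0
  have step : ∀ j, j < l → a j < l.choose j → a (j + 1) < l.choose (j + 1) := by
    intro j hj hlt
    by_contra hge
    push_neg at hge
    exact absurd (kk_step Δ hdc hln hj hge) (not_le.2 hlt)
  have hchain : ∀ m, j0 + m ≤ l → a (j0 + m) < l.choose (j0 + m) := by
    intro m
    induction m with
    | zero => intro _; rw [Nat.add_zero]; exact hj0a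
    | succ m ih =>
      intro hm
      have h1 : j0 + m < l := by omega
      have h2 := step (j0 + m) h1 (ih (by omega))
      rw [Nat.add_succ]
      exact h2
  have hchain' : ∀ j, j0 ≤ j → j ≤ l → a j < l.choose j := by
    intro j h1 h2
    have := hchain (j - j0) (by omega)
    have he : j0 + (j - j0) = j := by omega
    rwa [he] at this
  have hal : a l = 0 := by
    have := hchain' l (hj0d.trans hdl) le_rfl
    simp only [Nat.choose_self] at this
    omega
  have hup : ∀ j, l < j → a j = 0 := by
    intro j hj
    show (Δ.filter (fun s => s.card = j)).card = 0
    rw [Finset.card_eq_zero]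
    by_contra hne
    obtain ⟨s, hs⟩ := Finset.nonempty_iff_ne_empty.2 hne
    rw [Finset.mem_filter] at hs
    obtain ⟨t, hts, htc⟩ := Finset.exists_subset_card_eq (n := l)
      (by rw [hs.2]; omega : l ≤ s.card)
    have htΔ : t ∈ Δ := hdc s hs.1 t hts
    have hmem : t ∈ Δ.filter (fun s => s.card = l) := Finset.mem_filter.2 ⟨htΔ, htc⟩
    have hpos : 0 < (Δ.filter (fun s => s.card = l)).card := Finset.card_pos.2 ⟨t, hmem⟩
    have hl0 : (Δ.filter (fun s => s.card = l)).card = 0 := hal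
    omega
  -- totals
  have hd_le_n : d ≤ n := hdl.trans hln
  have hsplit1 : ∑ j ∈ Finset.range (n + 1), a j
      = ∑ j ∈ Finset.range (d + 1), a j + ∑ j ∈ Finset.Ico (d + 1) (n + 1), a j := by
    rw [Finset.range_eq_Ico, ← Finset.sum_Ico_consecutive _ (Nat.zero_le _) (by omega : d + 1 ≤ n + 1)]
    rw [Finset.range_eq_Ico]
  have hsplit2 : ∑ j ∈ Finset.Ico (d + 1) (n + 1), a j
      = ∑ j ∈ Finset.Ico (d + 1) (l + 1), a j + ∑ j ∈ Finset.Ico (l + 1) (n + 1), a j := by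
    rw [Finset.sum_Ico_consecutive _ (by omega : d + 1 ≤ l + 1) (by omega : l + 1 ≤ n + 1)]
  have hthird : ∑ j ∈ Finset.Ico (l + 1) (n + 1), a j = 0 := by
    refine Finset.sum_eq_zero (fun j hj => ?_)
    exact hup j (by have := Finset.mem_Ico.1 hj; omega)
  have hmid : ∑ j ∈ Finset.Ico (d + 1) (l + 1), a j + (l - d)
      ≤ ∑ j ∈ Finset.Ico (d + 1) (l + 1), l.choose j := by
    have : ∀ j ∈ Finset.Ico (d + 1) (l + 1), a j + 1 ≤ l.choose j := by
      intro j hj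
      have hj' := Finset.mem_Ico.1 hj
      exact hchain' j (by omega) (by omega)
    calc ∑ j ∈ Finset.Ico (d + 1) (l + 1), a j + (l - d)
        = ∑ j ∈ Finset.Ico (d + 1) (l + 1), (a j + 1) := by
          rw [Finset.sum_add_distrib, Finset.sum_const, Nat.card_Ico, smul_eq_mul, mul_one]
          omega
      _ ≤ ∑ j ∈ Finset.Ico (d + 1) (l + 1), l.choose j := Finset.sum_le_sum this
  have hchoose_split : ∑ j ∈ Finset.range (d + 1), l.choose j
      + ∑ j ∈ Finset.Ico (d + 1) (l + 1), l.choose j = 2 ^ l := by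
    rw [Finset.range_eq_Ico, Finset.sum_Ico_consecutive _ (Nat.zero_le _) (by omega : d + 1 ≤ l + 1)]
    rw [← Finset.range_eq_Ico]
    exact Nat.sum_range_choose l
  have hB1 : 1 ≤ ∑ i ∈ Finset.range (d + 1), l.choose i := by
    have : l.choose 0 = 1 := Nat.choose_zero_right l
    calc 1 = l.choose 0 := this.symm
      _ ≤ ∑ i ∈ Finset.range (d + 1), l.choose i :=
        Finset.single_le_sum (fun i _ => Nat.zero_le _) (Finset.mem_range.2 (Nat.succ_pos d))
  have h1 := hsum_le d
  omega


/-- Lemma B : Hilbert dimension lower bound for large sets -/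
lemma lemmaB (A : Finset (Fin n → ZMod 2)) {l d : ℕ} (hdl : d ≤ l) (hA : 2 ^ l ≤ A.card) :
    ∑ i ∈ Finset.range (d + 1), l.choose i
      ≤ Module.finrank (ZMod 2) ((Md n d).map (res (↑A : Set (Fin n → ZMod 2)))) := by
  have hcard : A.card ≤ 2 ^ n := by
    calc A.card ≤ Fintype.card (Fin n → ZMod 2) := Finset.card_le_univ A
      _ = 2 ^ n := by simp [ZMod.card]
  have hln : l ≤ n := by
    have : (2:ℕ) ^ l ≤ 2 ^ n := le_trans hA hcard
    exact (Nat.pow_le_pow_iff_right (by norm_num)).1 this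
  have h1 : 2 ^ l ≤ (Dset A).card := le_trans hA (card_Dset A)
  have h2 := count_lemma (Dset A) (fun s hs t hts => Dset_downclosed hs hts) l d hdl hln h1
  exact le_trans h2 (finrank_map_res_ge A d)

/-- degree-d closure -/
noncomputable def clD (d : ℕ) (T : Finset (Fin n → ZMod 2)) : Finset (Fin n → ZMod 2) :=
  @Finset.filter _ (fun x => ∀ g ∈ Md n d, (∀ t ∈ T, g t = 0) → g x = 0)
    (Classical.decPred _) Finset.univ

lemma mem_clD {d : ℕ} {T : Finset (Fin n → ZMod 2)} {x : Fin n → ZMod 2} :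
    x ∈ clD d T ↔ ∀ g ∈ Md n d, (∀ t ∈ T, g t = 0) → g x = 0 := by
  simp only [clD, Finset.mem_filter, Finset.mem_univ, true_and]

lemma subset_clD {d : ℕ} {T : Finset (Fin n → ZMod 2)} : T ⊆ clD d T := by
  intro x hx
  rw [mem_clD]
  intro g _ hg
  exact hg x hx

lemma finrank_clD_le (d : ℕ) (T : Finset (Fin n → ZMod 2)) :
    Module.finrank (ZMod 2) ((Md n d).map (res (↑(clD d T) : Set (Fin n → ZMod 2)))) ≤ T.card := by
  set C := clD d T with hC
  set φ : ((↑C : Set (Fin n → ZMod 2)) → ZMod 2) →ₗ[ZMod 2]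
      ((↑T : Set (Fin n → ZMod 2)) → ZMod 2) :=
    LinearMap.funLeft (ZMod 2) (ZMod 2)
      (fun t : (↑T : Set (Fin n → ZMod 2)) => (⟨t.1, subset_clD t.2⟩ : (↑C : Set (Fin n → ZMod 2)))) with hφ
  set K := (Md n d).map (res (↑C : Set (Fin n → ZMod 2))) with hK
  have hinj : Function.Injective (φ.domRestrict K) := by
    rw [← LinearMap.ker_eq_bot, LinearMap.ker_eq_bot']
    intro x hx
    obtain ⟨g, hgMd, hg⟩ := x.2
    apply Subtype.ext
    show (x : (↑C : Set (Fin n → ZMod 2)) → ZMod 2) = 0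
    rw [← hg]
    have hT0 : ∀ t ∈ T, g t = 0 := by
      intro t ht
      have hx0 : φ (x : (↑C : Set (Fin n → ZMod 2)) → ZMod 2) = 0 := hx
      have h2 : φ (x : (↑C : Set (Fin n → ZMod 2)) → ZMod 2) ⟨t, ht⟩ = 0 := by
        rw [hx0]; rfl
      rw [hφ, LinearMap.funLeft_apply] at h2
      rw [← hg] at h2
      exact h2
    funext a
    show g a.1 = 0
    exact (mem_clD.1 a.2) g hgMd hT0
  have := LinearMap.finrank_le_finrank_of_injective hinj
  calc Module.finrank (ZMod 2) K ≤ Module.finrank (ZMod 2)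
        ((↑T : Set (Fin n → ZMod 2)) → ZMod 2) := this
    _ = T.card := by rw [Module.finrank_pi]; simp

/-- Lemma A : small sets have small closure -/
lemma card_clD_lt {d l : ℕ} (hdl : d ≤ l) (T : Finset (Fin n → ZMod 2))
    (h : T.card < ∑ i ∈ Finset.range (d + 1), l.choose i) : (clD d T).card < 2 ^ l := by
  by_contra hc
  push_neg at hc
  have h1 := lemmaB (clD d T) hdl hc
  have h2 := finrank_clD_le d T
  omega

/-- full criterion -/
lemma full_of (d : ℕ) (T : Finset (Fin n → ZMod 2))
    (h : ∀ t ∈ T, t ∉ clD d (T.erase t)) :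
    (Md n d).map (res (↑T : Set (Fin n → ZMod 2))) = ⊤ := by
  rw [eq_top_iff]
  intro f _
  have hsingle : ∀ t : (↑T : Set (Fin n → ZMod 2)),
      (fun x : (↑T : Set (Fin n → ZMod 2)) => if t = x then (1 : ZMod 2) else 0)
        ∈ (Md n d).map (res (↑T : Set (Fin n → ZMod 2))) := by
    intro t
    have ht := h t.1 t.2
    rw [mem_clD] at ht
    push_neg at ht
    obtain ⟨g, hgMd, hg0, hgt⟩ := ht
    have hgt1 : g t.1 = 1 := by
      rcases zmod2_cases (g t.1) with h0 | h1
      · exact absurd h0 hgt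
      · exact h1
    refine ⟨g, hgMd, ?_⟩
    funext x
    rw [res, LinearMap.funLeft_apply]
    by_cases hx : t = x
    · rw [if_pos hx, ← hx, hgt1]
    · rw [if_neg hx]
      refine hg0 x.1 (Finset.mem_erase.2 ⟨?_, x.2⟩)
      intro he
      exact hx (Subtype.ext he.symm)
  rw [pi_eq_sum_univ f]
  exact Submodule.sum_mem _ (fun t _ => Submodule.smul_mem _ _ (hsingle t))

/-- polynomial evaluations of degree ≤ d are in Md -/
lemma eval_mem_Md {d : ℕ} (p : MvPolynomial (Fin n) (ZMod 2)) (hp : p.totalDegree ≤ d) :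
    (fun x => MvPolynomial.eval x p) ∈ Md n d := by
  have hfun : (fun x => MvPolynomial.eval x p)
      = ∑ m ∈ p.support, MvPolynomial.coeff m p • chi m.support := by
    funext x
    rw [MvPolynomial.eval_eq, Finset.sum_apply]
    refine Finset.sum_congr rfl (fun m _ => ?_)
    rw [Pi.smul_apply, smul_eq_mul]
    congr 1
    rw [chi]
    refine Finset.prod_congr rfl (fun i hi => ?_)
    have hmi : 1 ≤ m i := Nat.one_le_iff_ne_zero.2 (Finsupp.mem_support_iff.1 hi)
    rcases zmod2_cases (x i) with h0 | h1
    · rw [h0, zero_pow (by omega)]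
    · rw [h1, one_pow]
  rw [hfun]
  refine Submodule.sum_mem _ (fun m hm => Submodule.smul_mem _ _ (chi_mem_Md ?_))
  have h1 : m.support.card ≤ m.sum fun _ e => e := by
    rw [Finsupp.sum]
    calc m.support.card = ∑ _i ∈ m.support, 1 := by simp
      _ ≤ _ := Finset.sum_le_sum (fun i hi => Nat.one_le_iff_ne_zero.2 (Finsupp.mem_support_iff.1 hi))
  exact le_trans h1 (le_trans (MvPolynomial.le_totalDegree hm) hp)

lemma chi_eq_eval (s : Finset (Fin n)) :
    chi s = fun x => MvPolynomial.eval x (∏ i ∈ s, MvPolynomial.X i (R := ZMod 2)) := by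
  funext x
  rw [chi, map_prod]
  exact Finset.prod_congr rfl (fun i _ => by rw [MvPolynomial.eval_X])

/-- hilbertFn in terms of Md -/
lemma hilbert_eq (d : ℕ) (A : Set (Fin n → ZMod 2)) :
    hilbertFn (ZMod 2) d A = Module.finrank (ZMod 2) ((Md n d).map (res A)) := by
  have hset : {f : A → ZMod 2 | ∃ p : MvPolynomial (Fin n) (ZMod 2), p.totalDegree ≤ d ∧
      ∀ s : A, MvPolynomial.eval (s : Fin n → ZMod 2) p = f s}
      = (res A) '' {g : W n | ∃ p : MvPolynomial (Fin n) (ZMod 2), p.totalDegree ≤ d ∧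
          g = fun x => MvPolynomial.eval x p} := by
    ext f
    constructor
    · rintro ⟨p, hpd, hpf⟩
      refine ⟨fun x => MvPolynomial.eval x p, ⟨p, hpd, rfl⟩, ?_⟩
      funext s
      rw [res, LinearMap.funLeft_apply]
      exact hpf s
    · rintro ⟨g, ⟨p, hpd, rfl⟩, rfl⟩
      exact ⟨p, hpd, fun s => rfl⟩
  have hspan : Submodule.span (ZMod 2) {g : W n |
      ∃ p : MvPolynomial (Fin n) (ZMod 2), p.totalDegree ≤ d ∧
        g = fun x => MvPolynomial.eval x p} = Md n d := by
    apply le_antisymm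
    · rw [Submodule.span_le]
      rintro - ⟨p, hpd, rfl⟩
      exact eval_mem_Md p hpd
    · rw [Md, Submodule.span_le]
      rintro - ⟨s, hs, rfl⟩
      refine Submodule.subset_span ⟨∏ i ∈ s, MvPolynomial.X i, ?_, chi_eq_eval s⟩
      calc (∏ i ∈ s, MvPolynomial.X i (R := ZMod 2)).totalDegree
          ≤ ∑ i ∈ s, (MvPolynomial.X i (R := ZMod 2)).totalDegree :=
            MvPolynomial.totalDegree_finset_prod s _
        _ = s.card := by simp [MvPolynomial.totalDegree_X]
        _ ≤ d := hs
  have hmd : Submodule.span (ZMod 2) {f : A → ZMod 2 |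
      ∃ p : MvPolynomial (Fin n) (ZMod 2), p.totalDegree ≤ d ∧
        ∀ s : A, MvPolynomial.eval (s : Fin n → ZMod 2) p = f s}
      = (Md n d).map (res A) := by
    rw [hset, Submodule.span_image, hspan]
  rw [hilbertFn, hmd]

lemma hilbert_full (d : ℕ) (T : Finset (Fin n → ZMod 2))
    (h : ∀ t ∈ T, t ∉ clD d (T.erase t)) :
    hilbertFn (ZMod 2) d (↑T : Set (Fin n → ZMod 2)) = T.card := by
  rw [hilbert_eq, full_of d T h, finrank_top, Module.finrank_pi]
  simp


lemma bad_card_le (d l : ℕ) (hd : 1 ≤ d) (hdl : d ≤ l) (S : Finset (Fin n → ZMod 2))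
    [DecidablePred fun T : Finset (Fin n → ZMod 2) =>
      ¬ hilbertFn (ZMod 2) d (↑T : Set (Fin n → ZMod 2)) = T.card] :
    ((S.powersetCard (∑ i ∈ Finset.range (d + 1), l.choose i)).filter
        (fun T : Finset (Fin n → ZMod 2) =>
          ¬ hilbertFn (ZMod 2) d (↑T : Set (Fin n → ZMod 2)) = T.card)).card
      ≤ (S.powersetCard ((∑ i ∈ Finset.range (d + 1), l.choose i) - 1)).card
          * (2 ^ l - (∑ i ∈ Finset.range (d + 1), l.choose i)) := by
  classical
  set b := ∑ i ∈ Finset.range (d + 1), l.choose i with hbdef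
  have hb1 : 1 ≤ b := by
    calc 1 = l.choose 0 := (Nat.choose_zero_right l).symm
      _ ≤ b := Finset.single_le_sum (fun i _ => Nat.zero_le _) (Finset.mem_range.2 (Nat.succ_pos d))
  set badSet := (S.powersetCard b).filter
    (fun T : Finset (Fin n → ZMod 2) =>
      ¬ hilbertFn (ZMod 2) d (↑T : Set (Fin n → ZMod 2)) = T.card) with hbad
  have hbadP : ∀ T ∈ badSet, ∃ t, t ∈ T ∧ t ∈ clD d (T.erase t) := by
    intro T hT
    by_contra hno
    push_neg at hno
    exact (Finset.mem_filter.1 hT).2 (hilbert_full d T hno)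
  set tch : Finset (Fin n → ZMod 2) → (Fin n → ZMod 2) := fun T =>
    if h : ∃ t, t ∈ T ∧ t ∈ clD d (T.erase t) then h.choose else (fun _ => 0) with htch
  have hspec : ∀ T ∈ badSet, tch T ∈ T ∧ tch T ∈ clD d (T.erase (tch T)) := by
    intro T hT
    have h := hbadP T hT
    rw [htch]
    simp only [dif_pos h]
    exact h.choose_spec
  set target := ((S.powersetCard (b - 1)) ×ˢ (Finset.univ : Finset (Fin n → ZMod 2))).filter
    (fun q => q.2 ∈ clD d (q.1.erase q.2) ∧ q.2 ∉ q.1) with htarget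
  have hinj : badSet.card ≤ target.card := by
    apply Finset.card_le_card_of_injOn (fun T => (T.erase (tch T), tch T))
    · intro T hT
      obtain ⟨ht1, ht2⟩ := hspec T hT
      have hTm := (Finset.mem_filter.1 hT).1
      rw [Finset.mem_powersetCard] at hTm
      rw [htarget, Finset.mem_coe, Finset.mem_filter]
      refine ⟨Finset.mem_product.2 ⟨Finset.mem_powersetCard.2
        ⟨(Finset.erase_subset _ _).trans hTm.1, ?_⟩, Finset.mem_univ _⟩, ?_, ?_⟩
      · rw [Finset.card_erase_of_mem ht1, hTm.2]
      · show tch T ∈ clD d ((T.erase (tch T)).erase (tch T))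
        rwa [Finset.erase_idem]
      · exact Finset.notMem_erase _ _
    · intro T1 h1 T2 h2 he
      simp only [Prod.mk.injEq] at he
      have e1 : T1 = insert (tch T1) (T1.erase (tch T1)) :=
        (Finset.insert_erase (hspec T1 h1).1).symm
      have e2 : T2 = insert (tch T2) (T2.erase (tch T2)) :=
        (Finset.insert_erase (hspec T2 h2).1).symm
      rw [e1, e2, he.1, he.2]
  have hfib : target.card ≤ (S.powersetCard (b - 1)).card * (2 ^ l - b) := by
    rw [Finset.card_eq_sum_card_fiberwise (f := fun q : _ × _ => q.1)
      (t := S.powersetCard (b - 1)) (fun q hq => by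
        rw [Finset.mem_coe, htarget, Finset.mem_filter] at hq
        exact (Finset.mem_product.1 hq.1).1)]
    have hbound : ∀ T' ∈ S.powersetCard (b - 1),
        (target.filter (fun q => q.1 = T')).card ≤ 2 ^ l - b := by
      intro T' hT'
      have hT'c : T'.card = b - 1 := (Finset.mem_powersetCard.1 hT').2
      have hstep : (target.filter (fun q => q.1 = T')).card
          ≤ ((clD d T') \ T').card := by
        apply Finset.card_le_card_of_injOn (fun q => q.2)
        · intro q hq
          rw [Finset.mem_coe, Finset.mem_filter] at hq
          obtain ⟨hqt, hq1⟩ := hq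
          rw [htarget, Finset.mem_filter] at hqt
          obtain ⟨-, hcl, hnot⟩ := hqt
          rw [Finset.mem_coe, Finset.mem_sdiff]
          subst hq1
          refine ⟨?_, hnot⟩
          have : q.1.erase q.2 = q.1 := Finset.erase_eq_of_notMem hnot
          rwa [this] at hcl
        · intro q1 h1 q2 h2 he
          have e1 := (Finset.mem_filter.1 h1).2
          have e2 := (Finset.mem_filter.1 h2).2
          exact Prod.ext (e1.trans e2.symm) he
      have hcl : (clD d T').card < 2 ^ l := by
        apply card_clD_lt hdl
        omega
      have hsd : ((clD d T') \ T').card = (clD d T').card - (b - 1) := by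
        rw [Finset.card_sdiff_of_subset subset_clD, hT'c]
      have hTsub : T'.card ≤ (clD d T').card := Finset.card_le_card subset_clD
      omega
    calc ∑ T' ∈ S.powersetCard (b - 1), (target.filter (fun q => q.1 = T')).card
        ≤ ∑ T' ∈ S.powersetCard (b - 1), (2 ^ l - b) := Finset.sum_le_sum hbound
      _ = (S.powersetCard (b - 1)).card * (2 ^ l - b) := by
          rw [Finset.sum_const, smul_eq_mul]
  exact le_trans hinj hfib

end Stmt19

open Classical in
/-- For `1 ≤ d ≤ n`, `d ≤ ℓ`, and `S ⊆ {0,1}^n`: a uniformly random subset `T ⊆ S` of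
size `b = ∑_{i=0}^d C(ℓ,i)` has full Hilbert dimension (`h_T(d,F_2) = |T|`) with
probability at least `1 − b·2^ℓ/|S|`.  Stated by counting size-`b` subsets. -/
theorem stmt19 (n d l : ℕ) (hd : 1 ≤ d) (hdn : d ≤ n) (hdl : d ≤ l)
    (S : Finset (Fin n → ZMod 2)) :
    ((1 : ℝ) - ((∑ i ∈ Finset.range (d + 1), l.choose i : ℕ) : ℝ) * 2 ^ l / (S.card : ℝ))
        * ((S.powersetCard (∑ i ∈ Finset.range (d + 1), l.choose i)).card : ℝ)
      ≤ (((S.powersetCard (∑ i ∈ Finset.range (d + 1), l.choose i)).filter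
          (fun T : Finset (Fin n → ZMod 2) => hilbertFn (ZMod 2) d (↑T : Set (Fin n → ZMod 2)) = T.card)).card : ℝ) := by
  set b := ∑ i ∈ Finset.range (d + 1), l.choose i with hbdef
  have hb1 : 1 ≤ b := by
    calc 1 = l.choose 0 := (Nat.choose_zero_right l).symm
      _ ≤ b := Finset.single_le_sum (fun i _ => Nat.zero_le _) (Finset.mem_range.2 (Nat.succ_pos d))
  have hbM : b ≤ 2 ^ l := by
    calc b ≤ ∑ i ∈ Finset.range (l + 1), l.choose i :=
        Finset.sum_le_sum_of_subset (by
          intro i hi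
          rw [Finset.mem_range] at hi ⊢
          omega)
      _ = 2 ^ l := Nat.sum_range_choose l
  by_cases h0 : (S.powersetCard b).card = 0
  · have hf0 : ((S.powersetCard b).filter
        (fun T : Finset (Fin n → ZMod 2) =>
          hilbertFn (ZMod 2) d (↑T : Set (Fin n → ZMod 2)) = T.card)).card = 0 :=
      le_antisymm (le_trans (Finset.card_filter_le _ _) (le_of_eq h0)) (Nat.zero_le _)
    rw [h0, hf0]
    norm_num
  · have hbS : b ≤ S.card := by
      by_contra hlt
      push_neg at hlt
      rw [Finset.card_powersetCard, Nat.choose_eq_zero_of_lt hlt] at h0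
      exact h0 rfl
    have hS0 : 0 < S.card := lt_of_lt_of_le hb1 hbS
    have hS0R : (0:ℝ) < (S.card : ℝ) := by exact_mod_cast hS0
    by_cases hsmall : (S.card : ℝ) ≤ (b : ℝ) * 2 ^ l
    · have hfac : (1 : ℝ) - (b : ℝ) * 2 ^ l / (S.card : ℝ) ≤ 0 := by
        rw [sub_nonpos]
        rw [le_div_iff₀ hS0R]
        linarith
      calc ((1 : ℝ) - (b : ℝ) * 2 ^ l / (S.card : ℝ)) * ((S.powersetCard b).card : ℝ)
          ≤ 0 * ((S.powersetCard b).card : ℝ) :=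
            mul_le_mul_of_nonneg_right hfac (Nat.cast_nonneg _)
        _ = 0 := by ring
        _ ≤ _ := Nat.cast_nonneg _
    · push_neg at hsmall
      -- counting
      have hsplit := Finset.card_filter_add_card_filter_not
        (s := S.powersetCard b)
        (p := fun T : Finset (Fin n → ZMod 2) =>
          hilbertFn (ZMod 2) d (↑T : Set (Fin n → ZMod 2)) = T.card)
      have hbadle := Stmt19.bad_card_le (n := n) d l hd hdl S
      -- connect
      set good := ((S.powersetCard b).filter
        (fun T : Finset (Fin n → ZMod 2) =>
          hilbertFn (ZMod 2) d (↑T : Set (Fin n → ZMod 2)) = T.card)).card with hgood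
      set bad := ((S.powersetCard b).filter
        (fun T : Finset (Fin n → ZMod 2) =>
          ¬ hilbertFn (ZMod 2) d (↑T : Set (Fin n → ZMod 2)) = T.card)).card with hbadd
      set tot := (S.powersetCard b).card with htot
      set pc1 := (S.powersetCard (b - 1)).card with hpc1
      have hgb : good + bad = tot := hsplit
      have hbb : bad ≤ pc1 * (2 ^ l - b) := hbadle
      -- choose identity
      have hid : tot * b = pc1 * (S.card - (b - 1)) := by
        rw [htot, hpc1, Finset.card_powersetCard, Finset.card_powersetCard]
        have := Nat.choose_succ_right_eq S.card (b - 1)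
        have hb' : b - 1 + 1 = b := by omega
        rw [hb'] at this
        exact this
      -- real arithmetic
      have hbR : ((2 ^ l - b : ℕ) : ℝ) = (2 ^ l : ℝ) - (b : ℝ) := by
        push_cast [Nat.cast_sub hbM]
        ring
      have hidR : (tot : ℝ) * (b : ℝ) = (pc1 : ℝ) * ((S.card : ℝ) - (b : ℝ) + 1) := by
        have h1 : ((S.card - (b - 1) : ℕ) : ℝ) = (S.card : ℝ) - (b : ℝ) + 1 := by
          have hle : b - 1 ≤ S.card := by omega
          push_cast [Nat.cast_sub hle]
          have : ((b - 1 : ℕ) : ℝ) = (b : ℝ) - 1 := by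
            push_cast [Nat.cast_sub hb1]
            ring
          rw [this]
          ring
        calc (tot : ℝ) * (b : ℝ) = ((tot * b : ℕ) : ℝ) := by push_cast; ring
          _ = ((pc1 * (S.card - (b - 1)) : ℕ) : ℝ) := by rw [hid]
          _ = (pc1 : ℝ) * ((S.card : ℝ) - (b : ℝ) + 1) := by push_cast [h1]; ring
      have hgoodR : (good : ℝ) = (tot : ℝ) - (bad : ℝ) := by
        have : (good : ℝ) + (bad : ℝ) = (tot : ℝ) := by exact_mod_cast hgb
        linarith
      have hbadR : (bad : ℝ) ≤ (pc1 : ℝ) * ((2 ^ l : ℝ) - (b : ℝ)) := by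
        calc (bad : ℝ) ≤ ((pc1 * (2 ^ l - b) : ℕ) : ℝ) := by exact_mod_cast hbb
          _ = (pc1 : ℝ) * ((2 ^ l : ℝ) - (b : ℝ)) := by rw [Nat.cast_mul, hbR]
      -- final inequality
      rw [hgoodR]
      have hkey : (bad : ℝ) ≤ (b : ℝ) * 2 ^ l / (S.card : ℝ) * (tot : ℝ) := by
        refine le_trans hbadR ?_
        rw [div_mul_eq_mul_div, le_div_iff₀ hS0R]
        have hexp : (b : ℝ) * 2 ^ l * (tot : ℝ)
            = (2 ^ l : ℝ) * ((pc1 : ℝ) * ((S.card : ℝ) - (b : ℝ) + 1)) := by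
          rw [← hidR]; ring
        rw [hexp]
        have hpc1nn : (0:ℝ) ≤ (pc1 : ℝ) := Nat.cast_nonneg _
        have hb1R : (1:ℝ) ≤ (b : ℝ) := by exact_mod_cast hb1
        have hMpos : (0:ℝ) < (2:ℝ) ^ l := by positivity
        have hsb : (S.card : ℝ) ≤ (b : ℝ) * (S.card : ℝ) := le_mul_of_one_le_left hS0R.le hb1R
        have hfact : ((2 ^ l : ℝ) - (b : ℝ)) * (S.card : ℝ)
            ≤ (2 ^ l : ℝ) * ((S.card : ℝ) - (b : ℝ) + 1) := by nlinarith
        have hmul : (pc1:ℝ) * (((2 ^ l : ℝ) - (b : ℝ)) * (S.card : ℝ))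
            ≤ (pc1:ℝ) * ((2 ^ l : ℝ) * ((S.card : ℝ) - (b : ℝ) + 1)) :=
          mul_le_mul_of_nonneg_left hfact hpc1nn
        nlinarith [hmul]
      nlinarith [(Nat.cast_nonneg tot : (0:ℝ) ≤ (tot:ℝ))]
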